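/- For a nonzero vector ψ ∈ ℂ^d with d prime, the product of the support size of ψ (number of nonzero coordinates) and the support size of its discrete Fourier transform F†ψ is at least d, where F is the unitary matrix with entries F_{vv'} = d^{-1/2} e^{-2πi v v'/d}. -/

import Mathlib

open Complex Real Matrix

/-- Support size: number of nonzero coordinates. -/
noncomputable def supp {d : ℕ} (ψ : Fin d → ℂ) : ℕ :=
  (Finset.univ.filter (fun v => ψ v ≠ 0)).card

/-- The discrete Fourier matrix `F_{v v'} = d^{-1/2} e^{-2πi v v' / d}`. -/
noncomputable def Fourier (d : ℕ) : Matrix (Fin d) (Fin d) ℂ :=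
  fun v v' => (1 / Real.sqrt d : ℂ) *
    Complex.exp (-(2 * Real.pi * Complex.I * (v : ℕ) * (v' : ℕ)) / d)

noncomputable def χ (d : ℕ) (k : ℤ) : ℂ := Complex.exp (2 * Real.pi * Complex.I * k / d)

lemma chi_add (d : ℕ) (a b : ℤ) : χ d (a + b) = χ d a * χ d b := by
  rw [χ, χ, χ, ← Complex.exp_add]
  congr 1
  push_cast
  ring

lemma chi_zero (d : ℕ) : χ d 0 = 1 := by simp [χ]

lemma chi_pow (d : ℕ) (k : ℤ) (n : ℕ) : χ d (k * n) = (χ d k) ^ n := by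
  rw [χ, χ, ← Complex.exp_nat_mul]
  congr 1
  push_cast
  ring

lemma chi_sum (d : ℕ) (hd : 0 < d) (k : ℤ) (hk : ¬ (d : ℤ) ∣ k) :
    ∑ u : Fin d, χ d (k * u) = 0 := by
  have hζ : χ d k ≠ 1 := by
    intro h
    apply hk
    rw [χ, Complex.exp_eq_one_iff] at h
    obtain ⟨n, hn⟩ := h
    have hd0 : (d : ℂ) ≠ 0 := Nat.cast_ne_zero.2 hd.ne'
    have h2 : (2 * Real.pi * Complex.I : ℂ) ≠ 0 := by
      simp [Real.pi_ne_zero, Complex.I_ne_zero]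
    have : (k : ℂ) = n * d := by
      field_simp at hn
      apply mul_left_cancel₀ h2
      linear_combination (2 * Real.pi * Complex.I) * hn
    refine ⟨n, ?_⟩
    exact_mod_cast (by linear_combination this : (k : ℂ) = d * n)
  have : ∑ u : Fin d, χ d (k * u) = ∑ u ∈ Finset.range d, (χ d k) ^ u := by
    rw [Finset.sum_range fun u => (χ d k) ^ u]
    exact Finset.sum_congr rfl fun u _ => chi_pow d k u
  rw [this, geom_sum_eq hζ]
  have hpow : (χ d k) ^ d = 1 := by
    rw [← chi_pow, χ]
    have : (2 * Real.pi * Complex.I * ((k * d : ℤ) : ℂ) / d) = k * (2 * Real.pi * Complex.I) := by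
      have hd0 : (d : ℂ) ≠ 0 := Nat.cast_ne_zero.2 hd.ne'
      field_simp
      push_cast
      ring
    rw [this, Complex.exp_int_mul_two_pi_mul_I]
  rw [hpow, sub_self, zero_div]

lemma chi_conj (d : ℕ) (k : ℤ) : (starRingEnd ℂ) (χ d k) = χ d (-k) := by
  rw [χ, χ, ← Complex.exp_conj]
  congr 1
  simp only [map_div₀, _root_.map_mul, map_ofNat, Complex.conj_I, Complex.conj_ofReal,
    map_intCast, map_natCast]
  push_cast
  ring

lemma chi_orth (d : ℕ) (hd : 0 < d) (v w : Fin d) :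
    ∑ u : Fin d, χ d ((v : ℤ) * u) * χ d (-((w : ℤ) * u)) =
      if v = w then (d : ℂ) else 0 := by
  have h1 : ∀ u : Fin d, χ d ((v : ℤ) * u) * χ d (-((w : ℤ) * u)) =
      χ d (((v : ℤ) - w) * u) := by
    intro u
    rw [← chi_add]
    congr 1
    ring
  simp only [h1]
  by_cases hvw : v = w
  · subst hvw
    simp [chi_zero]
  · rw [if_neg hvw]
    apply chi_sum d hd
    intro hdvd
    apply hvw
    have h2 : ((v : ℤ) - w) = 0 := by
      refine Int.eq_zero_of_abs_lt_dvd hdvd ?_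
      have hv := v.isLt
      have hw := w.isLt
      rw [abs_lt]
      omega
    have : (v : ℕ) = (w : ℕ) := by omega
    exact Fin.ext this

lemma fourierH_apply (d : ℕ) (u v : Fin d) :
    (Fourier d)ᴴ u v = (1 / Real.sqrt d : ℂ) * χ d ((v : ℤ) * u) := by
  have h0 : (Fourier d)ᴴ u v = (starRingEnd ℂ) (Fourier d v u) := rfl
  rw [h0, Fourier, _root_.map_mul]
  congr 1
  · simp only [map_div₀, _root_.map_one, Complex.conj_ofReal]
  · rw [χ, ← Complex.exp_conj]
    congr 1
    simp only [map_div₀, map_neg, _root_.map_mul, map_ofNat, Complex.conj_I,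
      Complex.conj_ofReal, map_natCast]
    push_cast
    ring

lemma plancherel (d : ℕ) (hd : 0 < d) (ψ : Fin d → ℂ) :
    ∑ u : Fin d, Complex.normSq (((Fourier d)ᴴ.mulVec ψ) u) =
      ∑ v : Fin d, Complex.normSq (ψ v) := by
  set c : ℂ := (1 / Real.sqrt d : ℂ) with hc
  have hd0 : (d : ℂ) ≠ 0 := Nat.cast_ne_zero.2 hd.ne'
  have hs : (Real.sqrt d : ℂ) * (Real.sqrt d : ℂ) = (d : ℂ) := by
    rw [← Complex.ofReal_mul, Real.mul_self_sqrt (Nat.cast_nonneg d)]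
    exact Complex.ofReal_natCast d
  have h1 : (starRingEnd ℂ) c = c := by
    simp only [hc, map_div₀, _root_.map_one, Complex.conj_ofReal]
  have hcc : c * (starRingEnd ℂ) c * d = 1 := by
    rw [h1, hc, div_mul_div_comm, one_mul, hs, one_div, inv_mul_cancel₀ hd0]
  have hφ : ∀ u, ((Fourier d)ᴴ.mulVec ψ) u = ∑ v : Fin d, c * χ d ((v : ℤ) * u) * ψ v := by
    intro u
    rw [mulVec, dotProduct]
    exact Finset.sum_congr rfl fun v _ => by rw [fourierH_apply]
  have key : ∑ u : Fin d, ((Fourier d)ᴴ.mulVec ψ) u *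
      (starRingEnd ℂ) (((Fourier d)ᴴ.mulVec ψ) u) =
      ∑ v : Fin d, ψ v * (starRingEnd ℂ) (ψ v) := by
    calc ∑ u : Fin d, ((Fourier d)ᴴ.mulVec ψ) u * (starRingEnd ℂ) (((Fourier d)ᴴ.mulVec ψ) u)
        = ∑ u : Fin d, ∑ v : Fin d, ∑ w : Fin d,
            (c * (starRingEnd ℂ) c) * (χ d ((v : ℤ) * u) * χ d (-((w : ℤ) * u))) *
              (ψ v * (starRingEnd ℂ) (ψ w)) := by
          refine Finset.sum_congr rfl fun u _ => ?_
          rw [hφ u, map_sum, Finset.sum_mul]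
          refine Finset.sum_congr rfl fun v _ => ?_
          rw [Finset.mul_sum]
          refine Finset.sum_congr rfl fun w _ => ?_
          simp only [_root_.map_mul, chi_conj]
          ring
      _ = ∑ v : Fin d, ∑ w : Fin d,
            (c * (starRingEnd ℂ) c) * (∑ u : Fin d, χ d ((v : ℤ) * u) * χ d (-((w : ℤ) * u))) *
              (ψ v * (starRingEnd ℂ) (ψ w)) := by
          rw [Finset.sum_comm]
          refine Finset.sum_congr rfl fun v _ => ?_
          rw [Finset.sum_comm]
          refine Finset.sum_congr rfl fun w _ => ?_
          rw [Finset.mul_sum, Finset.sum_mul]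
      _ = ∑ v : Fin d, ψ v * (starRingEnd ℂ) (ψ v) := by
          refine Finset.sum_congr rfl fun v _ => ?_
          have hterm : ∀ w : Fin d,
              (c * (starRingEnd ℂ) c) * (∑ u : Fin d, χ d ((v : ℤ) * u) * χ d (-((w : ℤ) * u))) *
                (ψ v * (starRingEnd ℂ) (ψ w)) =
              if w = v then ψ v * (starRingEnd ℂ) (ψ v) else 0 := by
            intro w
            rw [chi_orth d hd v w]
            by_cases h : v = w
            · subst h
              rw [if_pos rfl, if_pos rfl]
              linear_combination (ψ v * (starRingEnd ℂ) (ψ v)) * hcc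
            · rw [if_neg h, if_neg (fun h' => h h'.symm)]
              ring
          rw [Finset.sum_congr rfl (fun w _ => hterm w), Finset.sum_ite_eq' Finset.univ v]
          simp
  have := congrArg Complex.re key
  simpa [Complex.mul_conj, ← Complex.ofReal_sum] using this

lemma chi_abs (d : ℕ) (k : ℤ) : ‖χ d k‖ = 1 := by
  have : χ d k = Complex.exp (((2 * Real.pi * k / d : ℝ) : ℂ) * Complex.I) := by
    rw [χ]
    congr 1
    push_cast
    ring
  rw [this, Complex.norm_exp_ofReal_mul_I]

theorem support_product_inequality (d : ℕ) (hd : d.Prime)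
    (ψ : Fin d → ℂ) (hψ : ψ ≠ 0) :
    d ≤ supp ψ * supp ((Fourier d)ᴴ.mulVec ψ) := by
  have hd0 : 0 < d := hd.pos
  have hdR : (0 : ℝ) < d := by exact_mod_cast hd0
  set φ : Fin d → ℂ := (Fourier d)ᴴ.mulVec ψ with hφdef
  set S : ℝ := ∑ v : Fin d, Complex.normSq (ψ v) with hSdef
  set M : ℝ := ∑ v : Fin d, ‖ψ v‖ with hMdef
  -- S > 0
  have hS : 0 < S := by
    obtain ⟨v, hv⟩ := Function.ne_iff.1 hψ
    refine Finset.sum_pos' (fun i _ => Complex.normSq_nonneg _) ⟨v, Finset.mem_univ v, ?_⟩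
    exact Complex.normSq_pos.2 hv
  -- pointwise bound on φ
  have hφbound : ∀ u : Fin d, Complex.normSq (φ u) ≤ M ^ 2 / d := by
    intro u
    have habs : ‖φ u‖ ≤ (1 / Real.sqrt d) * M := by
      have h1 : φ u = ∑ v : Fin d, (1 / Real.sqrt d : ℂ) * χ d ((v : ℤ) * u) * ψ v := by
        rw [hφdef, mulVec, dotProduct]
        exact Finset.sum_congr rfl fun v _ => by rw [fourierH_apply]
      rw [h1]
      refine le_trans (norm_sum_le _ _) ?_
      rw [hMdef, Finset.mul_sum]
      refine Finset.sum_le_sum fun v _ => ?_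
      rw [norm_mul, norm_mul, chi_abs, mul_one]
      have : ‖(1 / Real.sqrt d : ℂ)‖ = 1 / Real.sqrt d := by
        rw [norm_div, norm_one, Complex.norm_of_nonneg (Real.sqrt_nonneg _)]
      rw [this]
    have h0 : (0 : ℝ) ≤ ‖φ u‖ := norm_nonneg _
    have hM0 : (0 : ℝ) ≤ M := Finset.sum_nonneg fun v _ => norm_nonneg _
    have := mul_le_mul habs habs h0
      (mul_nonneg (by positivity : (0:ℝ) ≤ 1 / Real.sqrt d) hM0)
    rw [← Complex.sq_norm, pow_two]
    calc ‖φ u‖ * ‖φ u‖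
        ≤ ((1 / Real.sqrt d) * M) * ((1 / Real.sqrt d) * M) := this
      _ = M ^ 2 / (Real.sqrt d * Real.sqrt d) := by ring
      _ = M ^ 2 / d := by rw [Real.mul_self_sqrt (le_of_lt hdR)]
  -- Cauchy–Schwarz
  have hCS : M ^ 2 ≤ (supp ψ : ℝ) * S := by
    set T := Finset.univ.filter (fun v => ψ v ≠ 0) with hT
    have hM' : M = ∑ v ∈ T, ‖ψ v‖ := by
      rw [hMdef]
      symm
      refine Finset.sum_subset (Finset.filter_subset _ _) fun v _ hv => ?_
      simp only [hT, Finset.mem_filter, Finset.mem_univ, true_and, not_not] at hv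
      simp [hv]
    have h1 : (∑ v ∈ T, ‖ψ v‖) ^ 2 ≤
        (T.card : ℝ) * ∑ v ∈ T, (‖ψ v‖) ^ 2 := by
      exact sq_sum_le_card_mul_sum_sq
    have h2 : ∑ v ∈ T, (‖ψ v‖) ^ 2 ≤ S := by
      rw [hSdef]
      refine Finset.sum_le_sum_of_subset_of_nonneg (Finset.filter_subset _ _) ?_ |>.trans ?_
      · intro i _ _
        positivity
      · refine le_of_eq (Finset.sum_congr rfl fun v _ => ?_)
        rw [Complex.sq_norm]
    rw [hM', supp]
    calc (∑ v ∈ T, ‖ψ v‖) ^ 2 ≤ (T.card : ℝ) * ∑ v ∈ T, (‖ψ v‖) ^ 2 := h1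
      _ ≤ (T.card : ℝ) * S := by
          exact mul_le_mul_of_nonneg_left h2 (Nat.cast_nonneg _)
  -- Plancherel + support bound for φ
  have hP : S = ∑ u : Fin d, Complex.normSq (φ u) := (plancherel d hd0 ψ).symm
  have hsum : ∑ u : Fin d, Complex.normSq (φ u) ≤ (supp φ : ℝ) * (M ^ 2 / d) := by
    set Tφ := Finset.univ.filter (fun u => φ u ≠ 0) with hTφ
    have h1 : ∑ u : Fin d, Complex.normSq (φ u) = ∑ u ∈ Tφ, Complex.normSq (φ u) := by
      symm
      refine Finset.sum_subset (Finset.filter_subset _ _) fun u _ hu => ?_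
      simp only [hTφ, Finset.mem_filter, Finset.mem_univ, true_and, not_not] at hu
      simp [hu]
    rw [h1, supp]
    have := Finset.sum_le_card_nsmul Tφ (fun u => Complex.normSq (φ u)) (M ^ 2 / d)
      (fun u _ => hφbound u)
    simpa [nsmul_eq_mul] using this
  -- combine
  have hfinal : (d : ℝ) * S ≤ (supp ψ : ℝ) * (supp φ : ℝ) * S := by
    have h1 : S ≤ (supp φ : ℝ) * (M ^ 2 / d) := hP.trans_le hsum
    have h2 : (supp φ : ℝ) * (M ^ 2 / d) ≤ (supp φ : ℝ) * (((supp ψ : ℝ) * S) / d) := by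
      apply mul_le_mul_of_nonneg_left _ (Nat.cast_nonneg _)
      exact div_le_div_of_nonneg_right hCS hdR.le |>.trans_eq rfl
    have h3 : S ≤ (supp φ : ℝ) * (((supp ψ : ℝ) * S) / d) := h1.trans h2
    calc (d : ℝ) * S ≤ (d : ℝ) * ((supp φ : ℝ) * (((supp ψ : ℝ) * S) / d)) := by
          exact mul_le_mul_of_nonneg_left h3 (le_of_lt hdR)
      _ = (supp ψ : ℝ) * (supp φ : ℝ) * S := by
          field_simp
  have : (d : ℝ) ≤ (supp ψ : ℝ) * (supp φ : ℝ) := le_of_mul_le_mul_right hfinal hS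
  exact_mod_cast this
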